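/- Let x₁ ≥ x₂ ≥ … ≥ x_m and y₁ ≥ y₂ ≥ … ≥ y_m be dual numbers, and let z₁, …, z_m be dual numbers such that for every k ≤ m−1 the sum of the k largest z's is at most y₁ + … + y_k, and z₁ + … + z_m = y₁ + … + y_m. Then Σᵢ xᵢzᵢ ≤ Σᵢ xᵢyᵢ. -/

import Mathlib

open TrivSqZeroExt Finset

/-- Lexicographic order on dual numbers: `q ≤ p`. -/
def DualNumber.Le (q p : DualNumber ℝ) : Prop :=
  q.fst < p.fst ∨ (q.fst = p.fst ∧ q.snd ≤ p.snd)

namespace DualMajAux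

noncomputable instance : LinearOrder (DualNumber ℝ) :=
  LinearOrder.lift' (fun p : DualNumber ℝ => toLex (p.fst, p.snd))
    (fun a b h => by
      have h1 : (a.fst, a.snd) = (b.fst, b.snd) := congrArg ofLex h
      have hf : a.fst = b.fst := congrArg Prod.fst h1
      have hs : a.snd = b.snd := congrArg Prod.snd h1
      exact TrivSqZeroExt.ext hf hs)

lemma le_iff (a b : DualNumber ℝ) : a ≤ b ↔ DualNumber.Le a b := by
  show toLex (a.fst, a.snd) ≤ toLex (b.fst, b.snd) ↔ _
  rw [Prod.Lex.le_iff]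
  rfl

noncomputable instance : IsOrderedAddMonoid (DualNumber ℝ) where
  add_le_add_left a b h c := by
    rw [le_iff] at h ⊢
    rcases h with h | ⟨h1, h2⟩
    · left; simpa using h
    · right
      constructor
      · simp [h1]
      · simpa using h2

lemma mul_nonneg' {a b : DualNumber ℝ} (ha : 0 ≤ a) (hb : 0 ≤ b) : 0 ≤ a * b := by
  rw [le_iff] at ha hb ⊢
  unfold DualNumber.Le at ha hb ⊢
  simp only [fst_zero, snd_zero, fst_mul, snd_mul, smul_eq_mul, op_smul_eq_mul] at *
  rcases ha with h | ⟨h1, h2⟩ <;> rcases hb with h' | ⟨h1', h2'⟩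
  · left; exact mul_pos h h'
  · right
    constructor
    · rw [← h1']; ring
    · rw [← h1', mul_zero, add_zero]; exact mul_nonneg h.le h2'
  · right
    constructor
    · rw [← h1]; ring
    · rw [← h1, zero_mul, zero_add]; exact mul_nonneg h2 h'.le
  · right
    constructor
    · rw [← h1]; ring
    · nlinarith

/-- Extension of a `Fin m`-indexed family to `ℕ` by zero. -/
noncomputable def ext {m : ℕ} (f : Fin m → DualNumber ℝ) (n : ℕ) : DualNumber ℝ :=
  if h : n < m then f ⟨n, h⟩ else 0

lemma sum_ext {m : ℕ} (f : Fin m → DualNumber ℝ) :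
    ∑ i, f i = ∑ n ∈ range m, ext f n := by
  rw [← Fin.sum_univ_eq_sum_range (ext f) m]
  exact Finset.sum_congr rfl fun i _ => by simp [ext, i.isLt]

lemma sum_ext_partial {m : ℕ} (f : Fin m → DualNumber ℝ) {k : ℕ} (hk : k ≤ m) :
    ∑ i ∈ univ.filter (fun i : Fin m => (i : ℕ) < k), f i = ∑ n ∈ range k, ext f n := by
  have h1 : ∑ i ∈ univ.filter (fun i : Fin m => (i : ℕ) < k), f i
      = ∑ i : Fin m, (if (i : ℕ) < k then ext f i else 0) := by
    rw [Finset.sum_filter]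
    exact Finset.sum_congr rfl fun i _ => by simp [ext, i.isLt]
  rw [h1, Fin.sum_univ_eq_sum_range (fun n => if n < k then ext f n else 0) m,
    ← Finset.sum_filter]
  congr 1
  ext n
  simp only [Finset.mem_filter, Finset.mem_range]
  omega

/-- Abel-summation comparison lemma. -/
lemma abel_le {m : ℕ} (a b c : Fin m → DualNumber ℝ)
    (hc : ∀ i j : Fin m, i ≤ j → c j ≤ c i)
    (hpart : ∀ k, k < m → ∑ n ∈ range k, ext a n ≤ ∑ n ∈ range k, ext b n)
    (htot : ∑ i, a i = ∑ i, b i) :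
    ∑ i, c i * a i ≤ ∑ i, c i * b i := by
  rcases Nat.eq_zero_or_pos m with hm | hm
  · subst hm; simp
  rw [← sub_nonneg, ← Finset.sum_sub_distrib]
  have hrw : ∑ i, (c i * b i - c i * a i)
      = ∑ n ∈ range m, ext c n • (ext b n - ext a n) := by
    rw [sum_ext (fun i => c i * b i - c i * a i)]
    refine Finset.sum_congr rfl fun n hn => ?_
    have hn' : n < m := Finset.mem_range.mp hn
    simp [ext, hn', smul_eq_mul, mul_sub]
  rw [hrw, Finset.sum_range_by_parts (ext c) (fun n => ext b n - ext a n) m]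
  have hW : ∀ k, k ≤ m → 0 ≤ ∑ n ∈ range k, (ext b n - ext a n) := by
    intro k hk
    rw [Finset.sum_sub_distrib, sub_nonneg]
    rcases lt_or_eq_of_le hk with h | h
    · exact hpart k h
    · subst h
      rw [← sum_ext, ← sum_ext, htot]
  have hWm : ∑ n ∈ range m, (ext b n - ext a n) = 0 := by
    rw [Finset.sum_sub_distrib, ← sum_ext, ← sum_ext, htot, sub_self]
  rw [hWm, smul_zero, zero_sub, ← Finset.sum_neg_distrib]
  refine Finset.sum_nonneg fun n hn => ?_
  have hn' : n < m - 1 := Finset.mem_range.mp hn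
  rw [← neg_smul, neg_sub]
  have hcd : 0 ≤ ext c n - ext c (n + 1) := by
    rw [sub_nonneg]
    have h1 : n + 1 < m := by omega
    have h2 : n < m := by omega
    simp only [ext, dif_pos h1, dif_pos h2]
    exact hc ⟨n, h2⟩ ⟨n + 1, h1⟩ (by simp)
  have hWn : 0 ≤ ∑ j ∈ range (n + 1), (ext b j - ext a j) := hW (n + 1) (by omega)
  rw [smul_eq_mul]
  exact mul_nonneg' hcd hWn

/-- Sum over any `k`-element subset is at most the sum of the first `k` values,
for an antitone family. -/
lemma sum_subset_le {m : ℕ} (x : Fin m → DualNumber ℝ)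
    (hx : ∀ i j : Fin m, i ≤ j → x j ≤ x i) (S : Finset (Fin m)) :
    ∑ i ∈ S, x i ≤ ∑ n ∈ range S.card, ext x n := by
  suffices H : ∀ k (S : Finset (Fin m)), S.card = k → ∑ i ∈ S, x i ≤ ∑ n ∈ range k, ext x n by
    simpa using H S.card S rfl
  intro k
  induction k with
  | zero =>
      intro S hS
      rw [Finset.card_eq_zero] at hS
      subst hS; simp
  | succ k ih =>
      intro S hS
      have hne : S.Nonempty := Finset.card_pos.mp (by omega)
      set j := S.max' hne with hj
      have hjS : j ∈ S := S.max'_mem hne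
      have hle : ∀ i ∈ S, i ≤ j := fun i hi => S.le_max' i hi
      have hcard' : (S.erase j).card = k := by
        rw [Finset.card_erase_of_mem hjS, hS]
        omega
      have hkj : k ≤ (j : ℕ) := by
        have hmap : ∀ i ∈ S, (i : ℕ) ∈ Finset.range ((j : ℕ) + 1) := by
          intro i hi
          simp only [Finset.mem_range]
          exact Nat.lt_succ_of_le (hle i hi)
        have := Finset.card_le_card_of_injOn (fun i : Fin m => (i : ℕ)) hmap
          (Function.Injective.injOn Fin.val_injective)
        rw [hS, Finset.card_range] at this
        omega
      have hxj : x j ≤ ext x k := by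
        have hkm : k < m := lt_of_le_of_lt hkj j.isLt
        simp only [ext, dif_pos hkm]
        exact hx ⟨k, hkm⟩ j hkj
      calc ∑ i ∈ S, x i = ∑ i ∈ S.erase j, x i + x j := (Finset.sum_erase_add S x hjS).symm
        _ ≤ ∑ n ∈ range k, ext x n + ext x k := add_le_add (ih _ hcard') hxj
        _ = ∑ n ∈ range (k + 1), ext x n := (Finset.sum_range_succ (ext x) k).symm

end DualMajAux

/-- Abel-summation majorization lemma over the dual numbers.  Here `zh` is the
decreasing rearrangement of `z` (via the permutation `σ`). -/
theorem dual_majorization_trace_lemma (m : ℕ) (x y z zh : Fin m → DualNumber ℝ)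
    (σ : Equiv.Perm (Fin m)) (hzh : ∀ i, zh i = z (σ i))
    (hx : ∀ i j : Fin m, i ≤ j → DualNumber.Le (x j) (x i))
    (hy : ∀ i j : Fin m, i ≤ j → DualNumber.Le (y j) (y i))
    (hz : ∀ i j : Fin m, i ≤ j → DualNumber.Le (zh j) (zh i))
    (hmaj : ∀ k : ℕ, k ≤ m - 1 →
      DualNumber.Le (∑ i ∈ univ.filter (fun i : Fin m => (i : ℕ) < k), zh i)
        (∑ i ∈ univ.filter (fun i : Fin m => (i : ℕ) < k), y i))
    (hsum : ∑ i, z i = ∑ i, y i) :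
    DualNumber.Le (∑ i, x i * z i) (∑ i, x i * y i) := by
  open DualMajAux in
  rw [← DualMajAux.le_iff]
  replace hx : ∀ i j : Fin m, i ≤ j → x j ≤ x i :=
    fun i j h => (DualMajAux.le_iff _ _).2 (hx i j h)
  replace hz : ∀ i j : Fin m, i ≤ j → zh j ≤ zh i :=
    fun i j h => (DualMajAux.le_iff _ _).2 (hz i j h)
  -- Step A : rearrangement via Abel summation
  have hpartA : ∀ k, k < m →
      ∑ n ∈ range k, DualMajAux.ext (fun j => x (σ j)) n ≤ ∑ n ∈ range k, DualMajAux.ext x n := by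
    intro k hk
    rw [← DualMajAux.sum_ext_partial (fun j => x (σ j)) hk.le,
      ← DualMajAux.sum_ext_partial x hk.le]
    set T := univ.filter (fun i : Fin m => (i : ℕ) < k) with hT
    have himg : ∑ i ∈ T.image σ, x i = ∑ i ∈ T, x (σ i) :=
      Finset.sum_image (fun a _ b _ h => σ.injective h)
    have hcardT : (T.image σ).card = k := by
      rw [Finset.card_image_of_injective _ σ.injective]
      have h2 : T.image (Fin.val) = Finset.range k := by
        ext n
        simp only [Finset.mem_image, Finset.mem_range, hT, Finset.mem_filter,
          Finset.mem_univ, true_and]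
        constructor
        · rintro ⟨i, hi, rfl⟩; exact hi
        · intro hn
          exact ⟨⟨n, lt_of_lt_of_le hn hk.le⟩, hn, rfl⟩
      rw [← Finset.card_range k, ← h2,
        Finset.card_image_of_injective _ Fin.val_injective]
    calc ∑ i ∈ T, x (σ i) = ∑ i ∈ T.image σ, x i := himg.symm
      _ ≤ ∑ n ∈ range (T.image σ).card, DualMajAux.ext x n :=
          DualMajAux.sum_subset_le x hx (T.image σ)
      _ = ∑ n ∈ range k, DualMajAux.ext x n := by rw [hcardT]
      _ = ∑ i ∈ T, x i := (DualMajAux.sum_ext_partial x hk.le).symm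
  have htotA : ∑ j, x (σ j) = ∑ j, x j := Equiv.sum_comp σ x
  have stepA : ∑ j, zh j * x (σ j) ≤ ∑ j, zh j * x j :=
    DualMajAux.abel_le (fun j => x (σ j)) x zh hz hpartA htotA
  -- Step B : majorization via Abel summation
  have hzhsum : ∑ i, zh i = ∑ i, y i := by
    rw [← hsum, ← Equiv.sum_comp σ z]
    exact Finset.sum_congr rfl fun j _ => hzh j
  have hpartB : ∀ k, k < m →
      ∑ n ∈ range k, DualMajAux.ext zh n ≤ ∑ n ∈ range k, DualMajAux.ext y n := by
    intro k hk
    rw [← DualMajAux.sum_ext_partial zh hk.le, ← DualMajAux.sum_ext_partial y hk.le]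
    exact (DualMajAux.le_iff _ _).2 (hmaj k (by omega))
  have stepB : ∑ i, x i * zh i ≤ ∑ i, x i * y i :=
    DualMajAux.abel_le zh y x hx hpartB hzhsum
  calc ∑ i, x i * z i = ∑ j, zh j * x (σ j) := by
        rw [← Equiv.sum_comp σ (fun i => x i * z i)]
        exact Finset.sum_congr rfl fun j _ => by rw [← hzh j, mul_comm]
    _ ≤ ∑ j, zh j * x j := stepA
    _ = ∑ i, x i * zh i := Finset.sum_congr rfl fun j _ => mul_comm _ _
    _ ≤ ∑ i, x i * y i := stepB
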